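/- Assume condition (exp). Then B_n² ≍ n^{(r+2)/(r+1)}, i.e. there are constants C_1, C_2 > 0 and N such that C_1 n^{(r+2)/(r+1)} ≤ B_n² ≤ C_2 n^{(r+2)/(r+1)} for all n ≥ N. -/

import Mathlib

open Finset Filter

/-- The number of multisets of total size `n` determined by the parameters `a j`
(the number of one-component multisets of size `j`), i.e.
`c_n = Σ_{η ∈ Ω_n} Π_{j=1}^n C(a_j + η_j - 1, η_j)` where
`Ω_n = {η : Σ_{j=1}^n j·η_j = n}` (indices shifted: `j ∈ Fin n` stands for `j+1`). -/
def multisetCount (a : ℕ → ℕ) (n : ℕ) : ℕ :=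
  ∑ η : Fin n → Fin (n + 1),
    if ∑ j : Fin n, (j.1 + 1) * (η j).1 = n then
      ∏ j : Fin n, Nat.choose (a (j.1 + 1) + (η j).1 - 1) (η j).1
    else 0

/-- `M_n(σ) = Σ_{j=1}^n j a_j e^{-jσ}/(1-e^{-jσ})`. -/
noncomputable def Mfun (a : ℕ → ℕ) (n : ℕ) (σ : ℝ) : ℝ :=
  ∑ j ∈ Finset.Icc 1 n, (j : ℝ) * (a j) * Real.exp (-(j * σ)) / (1 - Real.exp (-(j * σ)))

/-- `B_n²(σ) = Σ_{j=1}^n j² a_j e^{-jσ}/(1-e^{-jσ})²`. -/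
noncomputable def B2 (a : ℕ → ℕ) (n : ℕ) (σ : ℝ) : ℝ :=
  ∑ j ∈ Finset.Icc 1 n, (j : ℝ) ^ 2 * (a j) * Real.exp (-(j * σ)) / (1 - Real.exp (-(j * σ))) ^ 2

/-- Condition (exp): `a_j ≍ j^{r-1} y^j`, i.e. there are constants `D₁, D₂ > 0` with
`D₁ j^{r-1} y^j ≤ a_j ≤ D₂ j^{r-1} y^j` for all `j ≥ 1`. -/
def ExpansiveCond (a : ℕ → ℕ) (r y : ℝ) : Prop :=
  ∃ D₁ D₂ : ℝ, 0 < D₁ ∧ 0 < D₂ ∧ ∀ j : ℕ, 1 ≤ j →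
    D₁ * (j : ℝ) ^ (r - 1) * y ^ j ≤ (a j : ℝ) ∧ (a j : ℝ) ≤ D₂ * (j : ℝ) ^ (r - 1) * y ^ j


section AuxLemmas
open Real


lemma geom_aux {t : ℝ} (ht : 0 < t) (ht1 : t ≤ 1) (n : ℕ) :
    ∑ j ∈ Finset.Icc 1 n, Real.exp (-(j * t)) ≤ 2 / t := by
  have hx0 : 0 < Real.exp (-t) := Real.exp_pos _
  have hx1 : Real.exp (-t) < 1 := by rw [Real.exp_lt_one_iff]; linarith
  have h1 : ∑ j ∈ Finset.Icc 1 n, Real.exp (-(j * t)) ≤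
      ∑ j ∈ Finset.range (n+1), (Real.exp (-t)) ^ j := by
    have : ∀ j ∈ Finset.Icc 1 n, Real.exp (-(j * t)) = (Real.exp (-t)) ^ j := by
      intro j _; rw [← Real.exp_nat_mul]; ring_nf
    rw [Finset.sum_congr rfl this]
    refine Finset.sum_le_sum_of_subset_of_nonneg ?_ (fun j _ _ => by positivity)
    intro j hj; simp at hj ⊢; omega
  have h2 : ∑ j ∈ Finset.range (n+1), (Real.exp (-t)) ^ j ≤ 1 / (1 - Real.exp (-t)) := by
    rw [geom_sum_eq hx1.ne, show ((Real.exp (-t))^(n+1) - 1)/(Real.exp (-t) - 1)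
        = (1 - (Real.exp (-t))^(n+1))/(1 - Real.exp (-t)) by rw [← neg_div_neg_eq]; ring_nf]
    gcongr
    · linarith [pow_pos hx0 (n+1)]
  have key : Real.exp (-t) * (1 + t) ≤ 1 := by
    have h := Real.add_one_le_exp t
    have : Real.exp (-t) * (1 + t) ≤ Real.exp (-t) * Real.exp t :=
      mul_le_mul_of_nonneg_left (by linarith) hx0.le
    rwa [← Real.exp_add, neg_add_cancel, Real.exp_zero] at this
  have h3 : t / 2 ≤ 1 - Real.exp (-t) := by nlinarith
  calc _ ≤ 1 / (1 - Real.exp (-t)) := h1.trans h2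
    _ ≤ 2 / t := by rw [div_le_div_iff₀ (by linarith) ht]; nlinarith

lemma rpow_mul_exp_le {p c x : ℝ} (hp : 0 < p) (hc : 0 < c) (hx : 0 < x) :
    x ^ p * Real.exp (-(c * x)) ≤ (p / c) ^ p := by
  have hv : 0 < c * x / p := by positivity
  have hlog : Real.log (c * x / p) ≤ c * x / p := (Real.log_le_sub_one_of_pos hv).trans (by linarith)
  have hxeq : x = (p / c) * (c * x / p) := by field_simp
  have h1 : x ^ p = (p/c) ^ p * (c*x/p) ^ p := by
    conv_lhs => rw [hxeq]
    rw [Real.mul_rpow (by positivity) (by positivity)]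
  have h2 : (c*x/p) ^ p ≤ Real.exp (c * x) := by
    rw [Real.rpow_def_of_pos hv]
    apply Real.exp_le_exp.2
    calc Real.log (c*x/p) * p ≤ (c*x/p) * p := by
          apply mul_le_mul_of_nonneg_right hlog hp.le
      _ = c * x := by field_simp
  calc x ^ p * Real.exp (-(c*x)) ≤ ((p/c)^p * Real.exp (c*x)) * Real.exp (-(c*x)) := by
        rw [h1]; apply mul_le_mul_of_nonneg_right _ (Real.exp_pos _).le
        exact mul_le_mul_of_nonneg_left h2 (by positivity)
    _ = (p/c)^p := by rw [mul_assoc, ← Real.exp_add]; simp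


lemma sum_rpow_le {p : ℝ} (hp : -1 < p) (hp0 : p ≤ 0) (N : ℕ) :
    ∑ j ∈ Finset.Icc 1 N, (j:ℝ)^p ≤ (N:ℝ)^(p+1) / (p+1) := by
  have hc : 0 < p + 1 := by linarith
  induction N with
  | zero => simp [Real.zero_rpow hc.ne']
  | succ N ih =>
    rw [Finset.sum_Icc_succ_top (by omega)]
    have hN1 : (0:ℝ) < (N:ℝ) + 1 := by positivity
    have hb : ((1:ℝ) + (-(1/((N:ℝ)+1))))^(p+1) ≤ 1 + (p+1) * (-(1/((N:ℝ)+1))) :=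
      _root_.rpow_one_add_le_one_add_mul_self
        (by rw [neg_le, neg_neg, div_le_one hN1]; linarith) hc.le (by linarith)
    have hsplit : ((N:ℝ)+1)^(p+1) = ((N:ℝ)+1)^p * ((N:ℝ)+1) := by
      rw [Real.rpow_add hN1, Real.rpow_one]
    have key : (N:ℝ)^(p+1) + (p+1)*((N:ℝ)+1)^p ≤ ((N:ℝ)+1)^(p+1) := by
      have hNeq : (N:ℝ) = ((N:ℝ)+1) * (1 + (-(1/((N:ℝ)+1)))) := by field_simp; ring
      have h1 : (N:ℝ)^(p+1) = ((N:ℝ)+1)^(p+1) * ((1:ℝ) + (-(1/((N:ℝ)+1))))^(p+1) := by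
        conv_lhs => rw [hNeq]
        rw [Real.mul_rpow hN1.le (by rw [le_add_neg_iff_le, div_le_one hN1]; linarith)]
      have h2 : (N:ℝ)^(p+1) ≤ ((N:ℝ)+1)^(p+1) * (1 + (p+1) * (-(1/((N:ℝ)+1)))) := by
        rw [h1]; exact mul_le_mul_of_nonneg_left hb (Real.rpow_nonneg hN1.le _)
      have h3 : ((N:ℝ)+1)^(p+1) * (1 + (p+1) * (-(1/((N:ℝ)+1))))
          = ((N:ℝ)+1)^(p+1) - (p+1) * ((N:ℝ)+1)^p := by
        rw [hsplit]; field_simp; ring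
      linarith [h2, h3.symm.le]
    have hcast : ((N+1 : ℕ) : ℝ) = (N:ℝ)+1 := by push_cast; ring
    rw [hcast]
    have heq : (N:ℝ)^(p+1)/(p+1) + ((N:ℝ)+1)^p = ((N:ℝ)^(p+1) + (p+1)*((N:ℝ)+1)^p)/(p+1) := by
      field_simp
    calc ∑ j ∈ Finset.Icc 1 N, (j:ℝ)^p + ((N:ℝ)+1)^p
        ≤ (N:ℝ)^(p+1)/(p+1) + ((N:ℝ)+1)^p := by linarith [ih]
      _ = ((N:ℝ)^(p+1) + (p+1)*((N:ℝ)+1)^p)/(p+1) := heq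
      _ ≤ ((N:ℝ)+1)^(p+1)/(p+1) := by gcongr



lemma sumU (p : ℝ) (hp : -1 < p) :
    ∃ C : ℝ, 0 < C ∧ ∀ (t : ℝ) (n : ℕ), 0 < t → t ≤ 1 →
      ∑ j ∈ Finset.Icc 1 n, (j:ℝ) ^ p * Real.exp (-(j * t)) ≤ C * t ^ (-(p+1)) := by
  rcases le_or_gt p 0 with hp0 | hp0
  · have hc : 0 < p + 1 := by linarith
    refine ⟨1/(p+1) + 2, by positivity, fun t n ht ht1 => ?_⟩
    classical
    have htinv : (0:ℝ) < 1/t := by positivity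
    have hrw : t ^ (-(p+1)) = (1/t) ^ (p+1) := by
      rw [one_div, Real.inv_rpow ht.le, ← Real.rpow_neg ht.le]
    have hrw2 : (1/t) ^ p * (2/t) = 2 * t ^ (-(p+1)) := by
      rw [hrw, show (2:ℝ)/t = 2 * (1/t) by ring, Real.rpow_add htinv, Real.rpow_one]; ring
    rw [← Finset.sum_filter_add_sum_filter_not (Finset.Icc 1 n) (fun j : ℕ => (j:ℝ)*t ≤ 1)]
    have part1 : ∑ j ∈ (Finset.Icc 1 n).filter (fun j : ℕ => (j:ℝ)*t ≤ 1),
        (j:ℝ) ^ p * Real.exp (-(j * t)) ≤ 1/(p+1) * t ^ (-(p+1)) := by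
      set N := Nat.floor (1/t) with hN
      calc ∑ j ∈ (Finset.Icc 1 n).filter (fun j : ℕ => (j:ℝ)*t ≤ 1),
            (j:ℝ) ^ p * Real.exp (-(j * t))
          ≤ ∑ j ∈ (Finset.Icc 1 n).filter (fun j : ℕ => (j:ℝ)*t ≤ 1), (j:ℝ) ^ p := by
            refine Finset.sum_le_sum fun j hj => ?_
            have h1 : Real.exp (-(j*t)) ≤ 1 := by
              rw [Real.exp_le_one_iff]
              simp only [Finset.mem_filter, Finset.mem_Icc] at hj
              have : (0:ℝ) ≤ (j:ℝ) * t := by positivity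
              linarith
            nlinarith [Real.rpow_nonneg (Nat.cast_nonneg j) p, Real.exp_pos (-(j*t))]
        _ ≤ ∑ j ∈ Finset.Icc 1 N, (j:ℝ) ^ p := by
            refine Finset.sum_le_sum_of_subset_of_nonneg ?_
              (fun j _ _ => Real.rpow_nonneg (Nat.cast_nonneg j) p)
            intro j hj
            simp only [Finset.mem_filter, Finset.mem_Icc] at hj ⊢
            refine ⟨hj.1.1, Nat.le_floor ?_⟩
            rw [le_div_iff₀ ht]; exact hj.2
        _ ≤ (N:ℝ)^(p+1)/(p+1) := sum_rpow_le hp hp0 N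
        _ ≤ (1/t)^(p+1)/(p+1) := by
            have h1 : (N:ℝ)^(p+1) ≤ (1/t)^(p+1) :=
              Real.rpow_le_rpow (Nat.cast_nonneg N) (Nat.floor_le htinv.le) hc.le
            gcongr
        _ = 1/(p+1) * t ^ (-(p+1)) := by rw [hrw]; ring
    have part2 : ∑ j ∈ (Finset.Icc 1 n).filter (fun j : ℕ => ¬ ((j:ℝ)*t ≤ 1)),
        (j:ℝ) ^ p * Real.exp (-(j * t)) ≤ 2 * t ^ (-(p+1)) := by
      calc ∑ j ∈ (Finset.Icc 1 n).filter (fun j : ℕ => ¬ ((j:ℝ)*t ≤ 1)),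
            (j:ℝ) ^ p * Real.exp (-(j * t))
          ≤ ∑ j ∈ (Finset.Icc 1 n).filter (fun j : ℕ => ¬ ((j:ℝ)*t ≤ 1)),
            (1/t) ^ p * Real.exp (-(j * t)) := by
            refine Finset.sum_le_sum fun j hj => ?_
            simp only [Finset.mem_filter, Finset.mem_Icc, not_le] at hj
            have hj1 : 1/t ≤ (j:ℝ) := by
              rw [div_le_iff₀ ht]; nlinarith [hj.2]
            exact mul_le_mul_of_nonneg_right
              (Real.rpow_le_rpow_of_nonpos htinv hj1 hp0) (Real.exp_pos _).le
        _ ≤ (1/t) ^ p * ∑ j ∈ Finset.Icc 1 n, Real.exp (-(j * t)) := by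
            rw [← Finset.mul_sum]
            refine mul_le_mul_of_nonneg_left ?_ (Real.rpow_nonneg htinv.le p)
            refine Finset.sum_le_sum_of_subset_of_nonneg (Finset.filter_subset _ _)
              (fun j _ _ => (Real.exp_pos _).le)
        _ ≤ (1/t) ^ p * (2/t) :=
            mul_le_mul_of_nonneg_left (geom_aux ht ht1 n) (Real.rpow_nonneg htinv.le p)
        _ = 2 * t ^ (-(p+1)) := hrw2
    linarith
  · refine ⟨(2*p)^p * 4, by positivity, fun t n ht ht1 => ?_⟩
    have ht2 : 0 < t/2 := by linarith
    calc ∑ j ∈ Finset.Icc 1 n, (j:ℝ) ^ p * Real.exp (-(j * t))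
        ≤ ∑ j ∈ Finset.Icc 1 n, (2*p/t) ^ p * Real.exp (-(j * (t/2))) := by
          refine Finset.sum_le_sum fun j hj => ?_
          simp only [Finset.mem_Icc] at hj
          have hj0 : (0:ℝ) < j := by exact_mod_cast hj.1
          have hsplit : Real.exp (-(j*t)) = Real.exp (-((t/2) * j)) * Real.exp (-(j*(t/2))) := by
            rw [← Real.exp_add]; ring_nf
          rw [hsplit, ← mul_assoc]
          refine mul_le_mul_of_nonneg_right ?_ (Real.exp_pos _).le
          have := rpow_mul_exp_le hp0 ht2 hj0
          rwa [show p/(t/2) = 2*p/t by ring] at this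
      _ = (2*p/t) ^ p * ∑ j ∈ Finset.Icc 1 n, Real.exp (-(j * (t/2))) := by
          rw [Finset.mul_sum]
      _ ≤ (2*p/t) ^ p * (2/(t/2)) := by
          refine mul_le_mul_of_nonneg_left (geom_aux ht2 (by linarith) n)
            (Real.rpow_nonneg (by positivity) p)
      _ = (2*p)^p * 4 * t ^ (-(p+1)) := by
          rw [Real.div_rpow (by positivity) ht.le, Real.rpow_neg ht.le,
            Real.rpow_add ht, Real.rpow_one]
          have h1 : t ^ p ≠ 0 := (Real.rpow_pos_of_pos ht p).ne'
          field_simp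
          ring


lemma sumL (p : ℝ) (hp : 0 ≤ p) (t : ℝ) (n : ℕ) (ht : 0 < t) (ht1 : t ≤ 1/2)
    (htn : 1/t ≤ (n:ℝ)) :
    Real.exp (-1) * (4:ℝ)⁻¹ ^ (p+1) * t ^ (-(p+1)) ≤
      ∑ j ∈ Finset.Icc 1 n, (j:ℝ)^p * Real.exp (-(j*t)) := by
  set N := Nat.floor (1/t) with hNdef
  have htinv : (0:ℝ) < 1/t := by positivity
  have h4t : (0:ℝ) < 1/(4*t) := by positivity
  have hNle : (N:ℝ) ≤ 1/t := Nat.floor_le htinv.le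
  have hNgt : 1/t - 1 < (N:ℝ) := Nat.sub_one_lt_floor (1/t)
  have hNhalf : 1/(2*t) ≤ (N:ℝ) := by
    have h1 : 1/t - 1/(2*t) = 1/(2*t) := by field_simp; ring
    have h2 : (1:ℝ) ≤ 1/(2*t) := by rw [le_div_iff₀ (by linarith)]; linarith
    linarith
  have hNn : N ≤ n := by
    have : (N:ℝ) ≤ (n:ℝ) := hNle.trans htn
    exact_mod_cast this
  set s := Finset.Icc (N/2+1) N with hsdef
  have hsub : s ⊆ Finset.Icc 1 n := by
    intro j hj; simp only [hsdef, Finset.mem_Icc] at hj ⊢; omega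
  have hbound : ∀ j ∈ s, (1/(4*t))^p * Real.exp (-1) ≤ (j:ℝ)^p * Real.exp (-(j*t)) := by
    intro j hj
    simp only [hsdef, Finset.mem_Icc] at hj
    have hjge : 1/(4*t) ≤ (j:ℝ) := by
      have h1 : N ≤ 2 * (N/2+1) := by omega
      have h2 : (N:ℝ) ≤ 2 * ((N/2+1 : ℕ):ℝ) := by exact_mod_cast h1
      have h3 : ((N/2+1 : ℕ):ℝ) ≤ (j:ℝ) := by exact_mod_cast hj.1
      have h4 : 1/(4*t) = (1/(2*t))/2 := by ring
      rw [h4]; linarith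
    have hjle : (j:ℝ) * t ≤ 1 := by
      have h1 : (j:ℝ) ≤ (N:ℝ) := by exact_mod_cast hj.2
      calc (j:ℝ) * t ≤ (1/t) * t := by
            apply mul_le_mul_of_nonneg_right (h1.trans hNle) ht.le
        _ = 1 := by field_simp
    have hexp : Real.exp (-1) ≤ Real.exp (-(j*t)) := by
      rw [Real.exp_le_exp]; linarith
    have hpow : (1/(4*t))^p ≤ (j:ℝ)^p := Real.rpow_le_rpow h4t.le hjge hp
    have h5 : (0:ℝ) ≤ (1/(4*t))^p := Real.rpow_nonneg h4t.le p
    nlinarith [Real.exp_pos (-(1:ℝ)), Real.rpow_nonneg (Nat.cast_nonneg j : (0:ℝ) ≤ j) p]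
  have hcard : 1/(4*t) ≤ (s.card : ℝ) := by
    have h1 : s.card = N - N/2 := by
      rw [hsdef, Nat.card_Icc]; omega
    have h2 : ((N - N/2 : ℕ):ℝ) = (N:ℝ) - ((N/2 : ℕ):ℝ) := by
      have : N/2 ≤ N := Nat.div_le_self N 2
      push_cast [this]; ring
    have h3 : ((N/2 : ℕ):ℝ) ≤ (N:ℝ)/2 := Nat.cast_div_le
    rw [h1, h2]
    have h4 : 1/(4*t) = (1/(2*t))/2 := by ring
    rw [h4]; linarith
  calc Real.exp (-1) * (4:ℝ)⁻¹ ^ (p+1) * t ^ (-(p+1))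
      = (1/(4*t)) * ((1/(4*t))^p * Real.exp (-1)) := by
        have e1 : ((4:ℝ)⁻¹ : ℝ) ^ (p+1) * t ^ (-(p+1)) = (1/(4*t))^(p+1) := by
          rw [show (1:ℝ)/(4*t) = 4⁻¹ * (1/t) by ring,
            Real.mul_rpow (by norm_num) htinv.le, one_div,
            Real.inv_rpow ht.le, ← Real.rpow_neg ht.le]
        have e2 : (1/(4*t))^(p+1) = (1/(4*t))^p * (1/(4*t)) := by
          rw [Real.rpow_add h4t, Real.rpow_one]
        rw [mul_assoc, e1, e2]; ring
    _ ≤ (s.card : ℝ) * ((1/(4*t))^p * Real.exp (-1)) := by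
        apply mul_le_mul_of_nonneg_right hcard
        positivity
    _ ≤ ∑ j ∈ s, (j:ℝ)^p * Real.exp (-(j*t)) := by
        have := Finset.card_nsmul_le_sum s (fun j => (j:ℝ)^p * Real.exp (-(j*t)))
          ((1/(4*t))^p * Real.exp (-1)) hbound
        rwa [nsmul_eq_mul] at this
    _ ≤ ∑ j ∈ Finset.Icc 1 n, (j:ℝ)^p * Real.exp (-(j*t)) := by
        apply Finset.sum_le_sum_of_subset_of_nonneg hsub
        intro j _ _; positivity

lemma sumL2 (p : ℝ) (hp : 0 ≤ p) (t : ℝ) (n : ℕ) (hn : 1 ≤ n) (ht : (n:ℝ) * t ≤ 1) :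
    Real.exp (-1) * ((n:ℝ)/2)^(p+1) ≤ ∑ j ∈ Finset.Icc 1 n, (j:ℝ)^p * Real.exp (-(j*t)) := by
  have hn0 : (0:ℝ) < (n:ℝ) := by exact_mod_cast hn
  have hn2 : (0:ℝ) < (n:ℝ)/2 := by linarith
  set s := Finset.Icc (n/2+1) n with hsdef
  have hsub : s ⊆ Finset.Icc 1 n := by
    intro j hj; simp only [hsdef, Finset.mem_Icc] at hj ⊢; omega
  have hbound : ∀ j ∈ s, ((n:ℝ)/2)^p * Real.exp (-1) ≤ (j:ℝ)^p * Real.exp (-(j*t)) := by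
    intro j hj
    simp only [hsdef, Finset.mem_Icc] at hj
    have hjge : (n:ℝ)/2 ≤ (j:ℝ) := by
      have h1 : n ≤ 2 * (n/2+1) := by omega
      have h2 : (n:ℝ) ≤ 2 * ((n/2+1 : ℕ):ℝ) := by exact_mod_cast h1
      have h3 : ((n/2+1 : ℕ):ℝ) ≤ (j:ℝ) := by exact_mod_cast hj.1
      linarith
    have hjle : (j:ℝ) * t ≤ 1 := by
      rcases le_or_gt 0 t with h | h
      · have h1 : (j:ℝ) ≤ (n:ℝ) := by exact_mod_cast hj.2
        nlinarith
      · have hj0 : (0:ℝ) < (j:ℝ) := by exact_mod_cast (show 0 < j by omega)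
        nlinarith
    have hexp : Real.exp (-1) ≤ Real.exp (-(j*t)) := by
      rw [Real.exp_le_exp]; linarith
    have hpow : ((n:ℝ)/2)^p ≤ (j:ℝ)^p := Real.rpow_le_rpow hn2.le hjge hp
    nlinarith [Real.exp_pos (-(1:ℝ)), Real.rpow_nonneg hn2.le p]
  have hcard : (n:ℝ)/2 ≤ (s.card : ℝ) := by
    have h1 : s.card = n - n/2 := by rw [hsdef, Nat.card_Icc]; omega
    have h2 : ((n - n/2 : ℕ):ℝ) = (n:ℝ) - ((n/2 : ℕ):ℝ) := by
      have : n/2 ≤ n := Nat.div_le_self n 2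
      push_cast [this]; ring
    have h3 : ((n/2 : ℕ):ℝ) ≤ (n:ℝ)/2 := Nat.cast_div_le
    rw [h1, h2]; linarith
  calc Real.exp (-1) * ((n:ℝ)/2)^(p+1)
      = ((n:ℝ)/2) * (((n:ℝ)/2)^p * Real.exp (-1)) := by
        rw [Real.rpow_add hn2, Real.rpow_one]; ring
    _ ≤ (s.card : ℝ) * (((n:ℝ)/2)^p * Real.exp (-1)) := by
        apply mul_le_mul_of_nonneg_right hcard; positivity
    _ ≤ ∑ j ∈ s, (j:ℝ)^p * Real.exp (-(j*t)) := by
        have := Finset.card_nsmul_le_sum s (fun j => (j:ℝ)^p * Real.exp (-(j*t)))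
          (((n:ℝ)/2)^p * Real.exp (-1)) hbound
        rwa [nsmul_eq_mul] at this
    _ ≤ ∑ j ∈ Finset.Icc 1 n, (j:ℝ)^p * Real.exp (-(j*t)) := by
        apply Finset.sum_le_sum_of_subset_of_nonneg hsub
        intro j _ _; positivity

lemma exp_neg_le_one_div {x : ℝ} (hx : 0 ≤ x) : Real.exp (-x) ≤ 1/(1+x) := by
  rw [Real.exp_neg]
  rw [inv_eq_one_div, div_le_div_iff₀ (Real.exp_pos x) (by linarith)]
  nlinarith [Real.add_one_le_exp x]

section bounds
variable (a : ℕ → ℕ) (r y : ℝ) (n : ℕ)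

lemma yq_eq {y : ℝ} (hy : 0 < y) (j : ℕ) (σn : ℝ) :
    y ^ j * Real.exp (-(j * σn)) = Real.exp (-(j * (σn - Real.log y))) := by
  have h1 : y ^ j = Real.exp (j * Real.log y) := by
    conv_lhs => rw [← Real.exp_log hy]
    rw [← Real.exp_nat_mul]
  rw [h1, ← Real.exp_add]
  congr 1; ring

lemma M_lower {D₁ : ℝ} (hy : 1 ≤ y)
    (hD : ∀ j : ℕ, 1 ≤ j → D₁ * (j:ℝ) ^ (r-1) * y ^ j ≤ (a j : ℝ))
    (hD₁ : 0 ≤ D₁) {σn : ℝ} (hσ0 : 0 < σn) :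
    D₁ * ∑ j ∈ Finset.Icc 1 n, (j:ℝ)^r * Real.exp (-(j * (σn - Real.log y)))
      ≤ Mfun a n σn := by
  rw [Mfun, Finset.mul_sum]
  refine Finset.sum_le_sum fun j hj => ?_
  simp only [Finset.mem_Icc] at hj
  have hj0 : (0:ℝ) < j := by exact_mod_cast hj.1
  have hy0 : (0:ℝ) < y := by linarith
  set q := Real.exp (-(j * σn)) with hq
  have hq0 : 0 < q := Real.exp_pos _
  have hq1 : q < 1 := by
    rw [hq, Real.exp_lt_one_iff]; nlinarith
  have hjr : (j:ℝ)^r = (j:ℝ)^(r-1) * j := by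
    rw [show r = r-1+1 by ring, Real.rpow_add_one hj0.ne']; ring_nf
  have h1 : D₁ * ((j:ℝ)^r * Real.exp (-(j * (σn - Real.log y))))
      = (j:ℝ) * (D₁ * (j:ℝ)^(r-1) * y^j) * q := by
    rw [hjr, hq, ← yq_eq hy0]; ring
  have h2 : (j:ℝ) * (D₁ * (j:ℝ)^(r-1) * y^j) * q ≤ (j:ℝ) * (a j : ℝ) * q := by
    apply mul_le_mul_of_nonneg_right _ hq0.le
    exact mul_le_mul_of_nonneg_left (hD j hj.1) hj0.le
  have h3 : (j:ℝ) * (a j : ℝ) * q ≤ (j:ℝ) * (a j : ℝ) * q / (1 - q) := by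
    rw [le_div_iff₀ (by linarith)]
    have hx : (0:ℝ) ≤ (j:ℝ) * (a j : ℝ) * q := by positivity
    nlinarith
  linarith [h1.le.trans (h2.trans h3)]

lemma B2_lower {D₁ : ℝ} (hy : 1 ≤ y)
    (hD : ∀ j : ℕ, 1 ≤ j → D₁ * (j:ℝ) ^ (r-1) * y ^ j ≤ (a j : ℝ))
    (hD₁ : 0 ≤ D₁) {σn : ℝ} (hσ0 : 0 < σn) :
    D₁ * ∑ j ∈ Finset.Icc 1 n, (j:ℝ)^(r+1) * Real.exp (-(j * (σn - Real.log y)))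
      ≤ B2 a n σn := by
  rw [B2, Finset.mul_sum]
  refine Finset.sum_le_sum fun j hj => ?_
  simp only [Finset.mem_Icc] at hj
  have hj0 : (0:ℝ) < j := by exact_mod_cast hj.1
  have hy0 : (0:ℝ) < y := by linarith
  set q := Real.exp (-(j * σn)) with hq
  have hq0 : 0 < q := Real.exp_pos _
  have hq1 : q < 1 := by rw [hq, Real.exp_lt_one_iff]; nlinarith
  have hjr : (j:ℝ)^(r+1) = (j:ℝ)^(r-1) * ((j:ℝ)*(j:ℝ)) := by
    rw [show r+1 = r-1+1+1 by ring, Real.rpow_add_one hj0.ne', Real.rpow_add_one hj0.ne']; ring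
  have h1 : D₁ * ((j:ℝ)^(r+1) * Real.exp (-(j * (σn - Real.log y))))
      = (j:ℝ)^2 * (D₁ * (j:ℝ)^(r-1) * y^j) * q := by
    rw [hjr, hq, ← yq_eq hy0]; ring
  have h2 : (j:ℝ)^2 * (D₁ * (j:ℝ)^(r-1) * y^j) * q ≤ (j:ℝ)^2 * (a j : ℝ) * q := by
    apply mul_le_mul_of_nonneg_right _ hq0.le
    exact mul_le_mul_of_nonneg_left (hD j hj.1) (by positivity)
  have h3 : (j:ℝ)^2 * (a j : ℝ) * q ≤ (j:ℝ)^2 * (a j : ℝ) * q / (1 - q)^2 := by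
    have h1q : (0:ℝ) < 1 - q := by linarith
    rw [le_div_iff₀ (by positivity : (0:ℝ) < (1-q)^2)]
    have hx : (0:ℝ) ≤ (j:ℝ)^2 * (a j : ℝ) * q := by positivity
    have hle1 : (1-q)^2 ≤ 1 := by nlinarith
    nlinarith [mul_le_mul_of_nonneg_left hle1 hx]
  linarith [h1.le.trans (h2.trans h3)]

lemma M_upper {D₂ : ℝ} (hy : 1 ≤ y)
    (hD : ∀ j : ℕ, 1 ≤ j → (a j : ℝ) ≤ D₂ * (j:ℝ) ^ (r-1) * y ^ j)
    (hD₂ : 0 ≤ D₂) {σn u : ℝ} (hu : 0 < u) (huσ : u ≤ σn - Real.log y) :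
    Mfun a n σn ≤ D₂ * ∑ j ∈ Finset.Icc 1 n, (j:ℝ)^r * Real.exp (-(j * u))
      + D₂ * u⁻¹ * ∑ j ∈ Finset.Icc 1 n, (j:ℝ)^(r-1) * Real.exp (-(j * u)) := by
  rw [Mfun, Finset.mul_sum, Finset.mul_sum, ← Finset.sum_add_distrib]
  refine Finset.sum_le_sum fun j hj => ?_
  simp only [Finset.mem_Icc] at hj
  have hj0 : (0:ℝ) < j := by exact_mod_cast hj.1
  have hy0 : (0:ℝ) < y := by linarith
  have hlogy : 0 ≤ Real.log y := Real.log_nonneg hy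
  have hσ0 : 0 < σn := by linarith
  set q := Real.exp (-(j * σn)) with hq
  set E := Real.exp (-(j * u)) with hE
  have hq0 : 0 < q := Real.exp_pos _
  have hE0 : 0 < E := Real.exp_pos _
  have hju : 0 < (j:ℝ) * u := by positivity
  have hd0 : 0 < (j:ℝ)*u/(1+(j:ℝ)*u) := by positivity
  have hqE : 1 - q ≥ (j:ℝ)*u/(1+(j:ℝ)*u) := by
    have h1 : q ≤ Real.exp (-((j:ℝ)*u)) := by
      rw [hq, Real.exp_le_exp]
      have : u ≤ σn := by linarith
      nlinarith
    have h2 : Real.exp (-((j:ℝ)*u)) ≤ 1/(1+(j:ℝ)*u) := exp_neg_le_one_div hju.le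
    have h3 : (j:ℝ)*u/(1+(j:ℝ)*u) = 1 - 1/(1+(j:ℝ)*u) := by field_simp; ring
    linarith
  have hnum : (j:ℝ) * (a j : ℝ) * q ≤ (j:ℝ) * (D₂ * (j:ℝ)^(r-1) * E) := by
    have h1 : (a j : ℝ) * q ≤ (D₂ * (j:ℝ)^(r-1) * y^j) * q :=
      mul_le_mul_of_nonneg_right (hD j hj.1) hq0.le
    have h2 : (D₂ * (j:ℝ)^(r-1) * y^j) * q = D₂ * (j:ℝ)^(r-1) * Real.exp (-(j*(σn - Real.log y))) := by
      rw [hq, ← yq_eq hy0]; ring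
    have h3 : Real.exp (-(j*(σn - Real.log y))) ≤ E := by
      rw [hE, Real.exp_le_exp]; nlinarith
    have h4 : D₂ * (j:ℝ)^(r-1) * Real.exp (-(j*(σn - Real.log y))) ≤ D₂ * (j:ℝ)^(r-1) * E :=
      mul_le_mul_of_nonneg_left h3 (by positivity)
    calc (j:ℝ) * (a j : ℝ) * q = (j:ℝ) * ((a j : ℝ) * q) := by ring
      _ ≤ (j:ℝ) * (D₂ * (j:ℝ)^(r-1) * E) := by
          apply mul_le_mul_of_nonneg_left _ hj0.le
          exact h1.trans (h2.le.trans h4)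
  have hdiv : (j:ℝ) * (a j : ℝ) * q / (1 - q)
      ≤ ((j:ℝ) * (D₂ * (j:ℝ)^(r-1) * E)) / ((j:ℝ)*u/(1+(j:ℝ)*u)) := by
    apply div_le_div₀ (by positivity) hnum hd0 hqE
  have heq : ((j:ℝ) * (D₂ * (j:ℝ)^(r-1) * E)) / ((j:ℝ)*u/(1+(j:ℝ)*u))
      = D₂ * ((j:ℝ)^r * E) + D₂ * u⁻¹ * ((j:ℝ)^(r-1) * E) := by
    have hjr : (j:ℝ)^r = (j:ℝ)^(r-1) * j := by
      rw [show r = r-1+1 by ring, Real.rpow_add_one hj0.ne']; ring_nf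
    rw [hjr]
    field_simp
    ring
  linarith [hdiv.trans_eq heq]

lemma B2_upper {D₂ : ℝ} (hy : 1 ≤ y)
    (hD : ∀ j : ℕ, 1 ≤ j → (a j : ℝ) ≤ D₂ * (j:ℝ) ^ (r-1) * y ^ j)
    (hD₂ : 0 ≤ D₂) {σn u : ℝ} (hu : 0 < u) (huσ : u ≤ σn - Real.log y) :
    B2 a n σn ≤ 2*D₂ * ∑ j ∈ Finset.Icc 1 n, (j:ℝ)^(r+1) * Real.exp (-(j * u))
      + 2*D₂ * (u⁻¹)^2 * ∑ j ∈ Finset.Icc 1 n, (j:ℝ)^(r-1) * Real.exp (-(j * u)) := by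
  rw [B2, Finset.mul_sum, Finset.mul_sum, ← Finset.sum_add_distrib]
  refine Finset.sum_le_sum fun j hj => ?_
  simp only [Finset.mem_Icc] at hj
  have hj0 : (0:ℝ) < j := by exact_mod_cast hj.1
  have hy0 : (0:ℝ) < y := by linarith
  have hlogy : 0 ≤ Real.log y := Real.log_nonneg hy
  have hσ0 : 0 < σn := by linarith
  set q := Real.exp (-(j * σn)) with hq
  set E := Real.exp (-(j * u)) with hE
  have hq0 : 0 < q := Real.exp_pos _
  have hE0 : 0 < E := Real.exp_pos _
  have hju : 0 < (j:ℝ) * u := by positivity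
  have hd0 : 0 < (j:ℝ)*u/(1+(j:ℝ)*u) := by positivity
  have hqE : 1 - q ≥ (j:ℝ)*u/(1+(j:ℝ)*u) := by
    have h1 : q ≤ Real.exp (-((j:ℝ)*u)) := by
      rw [hq, Real.exp_le_exp]
      have : u ≤ σn := by linarith
      nlinarith
    have h2 : Real.exp (-((j:ℝ)*u)) ≤ 1/(1+(j:ℝ)*u) := exp_neg_le_one_div hju.le
    have h3 : (j:ℝ)*u/(1+(j:ℝ)*u) = 1 - 1/(1+(j:ℝ)*u) := by field_simp; ring
    linarith
  have hnum : (j:ℝ)^2 * (a j : ℝ) * q ≤ (j:ℝ)^2 * (D₂ * (j:ℝ)^(r-1) * E) := by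
    have h1 : (a j : ℝ) * q ≤ (D₂ * (j:ℝ)^(r-1) * y^j) * q :=
      mul_le_mul_of_nonneg_right (hD j hj.1) hq0.le
    have h2 : (D₂ * (j:ℝ)^(r-1) * y^j) * q = D₂ * (j:ℝ)^(r-1) * Real.exp (-(j*(σn - Real.log y))) := by
      rw [hq, ← yq_eq hy0]; ring
    have h3 : Real.exp (-(j*(σn - Real.log y))) ≤ E := by
      rw [hE, Real.exp_le_exp]; nlinarith
    have h4 : D₂ * (j:ℝ)^(r-1) * Real.exp (-(j*(σn - Real.log y))) ≤ D₂ * (j:ℝ)^(r-1) * E :=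
      mul_le_mul_of_nonneg_left h3 (by positivity)
    calc (j:ℝ)^2 * (a j : ℝ) * q = (j:ℝ)^2 * ((a j : ℝ) * q) := by ring
      _ ≤ (j:ℝ)^2 * (D₂ * (j:ℝ)^(r-1) * E) := by
          apply mul_le_mul_of_nonneg_left _ (by positivity)
          exact h1.trans (h2.le.trans h4)
  have hdiv : (j:ℝ)^2 * (a j : ℝ) * q / (1 - q)^2
      ≤ ((j:ℝ)^2 * (D₂ * (j:ℝ)^(r-1) * E)) / ((j:ℝ)*u/(1+(j:ℝ)*u))^2 := by
    apply div_le_div₀ (by positivity) hnum (by positivity)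
    apply pow_le_pow_left₀ hd0.le hqE
  have heq : ((j:ℝ)^2 * (D₂ * (j:ℝ)^(r-1) * E)) / ((j:ℝ)*u/(1+(j:ℝ)*u))^2
      = D₂ * (j:ℝ)^(r-1) * E * ((1+(j:ℝ)*u)^2 / u^2) := by
    field_simp
  have hber : (1+(j:ℝ)*u)^2 ≤ 2 + 2*((j:ℝ)*u)^2 := by nlinarith [sq_nonneg ((j:ℝ)*u - 1)]
  have hjr : (j:ℝ)^(r+1) = (j:ℝ)^(r-1) * ((j:ℝ)*(j:ℝ)) := by
    rw [show r+1 = r-1+1+1 by ring, Real.rpow_add_one hj0.ne', Real.rpow_add_one hj0.ne']; ring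
  have hfin : D₂ * (j:ℝ)^(r-1) * E * ((1+(j:ℝ)*u)^2 / u^2)
      ≤ 2*D₂ * ((j:ℝ)^(r+1) * E) + 2*D₂ * (u⁻¹)^2 * ((j:ℝ)^(r-1) * E) := by
    have h5 : D₂ * (j:ℝ)^(r-1) * E * ((1+(j:ℝ)*u)^2 / u^2)
        ≤ D₂ * (j:ℝ)^(r-1) * E * ((2 + 2*((j:ℝ)*u)^2) / u^2) := by
      apply mul_le_mul_of_nonneg_left _ (by positivity)
      apply div_le_div_of_nonneg_right hber (by positivity) |>.trans_eq rfl
    have h6 : D₂ * (j:ℝ)^(r-1) * E * ((2 + 2*((j:ℝ)*u)^2) / u^2)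
        = 2*D₂ * ((j:ℝ)^(r+1) * E) + 2*D₂ * (u⁻¹)^2 * ((j:ℝ)^(r-1) * E) := by
      rw [hjr]
      field_simp
      ring
    linarith
  linarith [(hdiv.trans_eq heq).trans hfin]
end bounds

end AuxLemmas

set_option maxHeartbeats 1000000 in
/-- under condition (exp), `B_n² ≍ n^{(r+2)/(r+1)}`. -/
theorem B2_asymptotics (a : ℕ → ℕ) (r y : ℝ) (hr : 0 < r) (hy : 1 ≤ y)
    (hexp : ExpansiveCond a r y)
    (σ : ℕ → ℝ) (hσ : ∀ n : ℕ, 1 ≤ n → 0 < σ n ∧ Mfun a n (σ n) = n) :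
    ∃ C₁ C₂ : ℝ, 0 < C₁ ∧ 0 < C₂ ∧ ∃ N : ℕ, ∀ n ≥ N,
      C₁ * (n : ℝ) ^ ((r + 2) / (r + 1)) ≤ B2 a n (σ n) ∧
      B2 a n (σ n) ≤ C₂ * (n : ℝ) ^ ((r + 2) / (r + 1)) := by
  classical
  obtain ⟨D₁, D₂, hD₁, hD₂, hD⟩ := hexp
  have hDlow : ∀ j : ℕ, 1 ≤ j → D₁ * (j:ℝ) ^ (r-1) * y ^ j ≤ (a j : ℝ) :=
    fun j hj => (hD j hj).1
  have hDup : ∀ j : ℕ, 1 ≤ j → (a j : ℝ) ≤ D₂ * (j:ℝ) ^ (r-1) * y ^ j :=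
    fun j hj => (hD j hj).2
  obtain ⟨CU1, hCU1, HU1⟩ := sumU (r-1) (by linarith)
  obtain ⟨CU2, hCU2, HU2⟩ := sumU r (by linarith)
  obtain ⟨CU3, hCU3, HU3⟩ := sumU (r+1) (by linarith)
  have hrp1 : (0:ℝ) < r + 1 := by linarith
  set e : ℝ := (r+2)/(r+1) with hedef
  have he0 : 0 ≤ e := by positivity
  set A : ℝ := D₂*CU2 + D₂*CU1 with hAdef
  have hA : 0 < A := by positivity
  set γ : ℝ := D₁ * (Real.exp (-1) * (4:ℝ)⁻¹^(r+1)) with hγdef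
  have hγ : 0 < γ := by positivity
  set B : ℝ := 2*D₂*CU3 + 2*D₂*CU1 with hBdef
  have hB : 0 < B := by positivity
  set δ : ℝ := D₁ * (Real.exp (-1) * (4:ℝ)⁻¹^(r+2)) with hδdef
  have hδ : 0 < δ := by positivity
  have hAe : 0 < A ^ e := Real.rpow_pos_of_pos hA e
  have hγe : 0 < γ ^ e := Real.rpow_pos_of_pos hγ e
  refine ⟨δ / A ^ e, B / γ ^ e, by positivity, by positivity, ?_⟩
  set K₁ : ℝ := 2 * (2*Real.exp 1/D₁) ^ (1/r) with hK₁def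
  set K₂ : ℝ := D₂ * (CU2 * ((1:ℝ)/2)^(-(r+1)))
    + D₂ * ((1:ℝ)/2)⁻¹ * (CU1 * ((1:ℝ)/2)^(-(r-1+1))) with hK₂def
  refine ⟨⌈max K₁ K₂⌉₊ + 1, fun n hn => ?_⟩
  have hn1 : 1 ≤ n := by omega
  have hn0 : (0:ℝ) < n := by exact_mod_cast hn1
  have hKn : max K₁ K₂ < (n:ℝ) := by
    have h1 : max K₁ K₂ ≤ (⌈max K₁ K₂⌉₊ : ℝ) := Nat.le_ceil _
    have h2 : (⌈max K₁ K₂⌉₊ : ℝ) + 1 ≤ (n:ℝ) := by exact_mod_cast hn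
    linarith
  have hK₁n : K₁ < (n:ℝ) := lt_of_le_of_lt (le_max_left _ _) hKn
  have hK₂n : K₂ < (n:ℝ) := lt_of_le_of_lt (le_max_right _ _) hKn
  obtain ⟨hσ0, hM⟩ := hσ n hn1
  set t : ℝ := σ n - Real.log y with htdef
  have hlogy : 0 ≤ Real.log y := Real.log_nonneg hy
  have hee : Real.exp (-1) * Real.exp 1 = 1 := by
    rw [← Real.exp_add]; norm_num
  -- Step 1 : 1/n < t
  have ht1n : 1/(n:ℝ) < t := by
    by_contra hcon
    push_neg at hcon
    have hnt : (n:ℝ) * t ≤ 1 := by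
      calc (n:ℝ) * t ≤ (n:ℝ) * (1/(n:ℝ)) := mul_le_mul_of_nonneg_left hcon hn0.le
        _ = 1 := by field_simp
    have hS := sumL2 r hr.le t n hn1 hnt
    have hML := M_lower a r y n hy hDlow hD₁.le hσ0
    have key : D₁ * (Real.exp (-1) * ((n:ℝ)/2)^(r+1)) ≤ (n:ℝ) := by
      calc D₁ * (Real.exp (-1) * ((n:ℝ)/2)^(r+1))
          ≤ D₁ * ∑ j ∈ Finset.Icc 1 n, (j:ℝ)^r * Real.exp (-(j*t)) :=
            mul_le_mul_of_nonneg_left hS hD₁.le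
        _ ≤ Mfun a n (σ n) := hML
        _ = (n:ℝ) := hM
    have hb : (0:ℝ) ≤ 2*Real.exp 1/D₁ := by positivity
    have hn2 : (2*Real.exp 1/D₁)^(1/r) < (n:ℝ)/2 := by
      rw [hK₁def] at hK₁n; linarith
    have hpow : 2*Real.exp 1/D₁ < ((n:ℝ)/2)^r := by
      have h5 := Real.rpow_lt_rpow (Real.rpow_nonneg hb _) hn2 hr
      rwa [← Real.rpow_mul hb, one_div_mul_cancel hr.ne', Real.rpow_one] at h5
    have hsplit : ((n:ℝ)/2)^(r+1) = ((n:ℝ)/2)^r * ((n:ℝ)/2) := by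
      rw [Real.rpow_add_one (by positivity : ((n:ℝ)/2) ≠ 0)]
    have h9 : (0:ℝ) < D₁ * Real.exp (-1) * ((n:ℝ)/2) := by positivity
    have h10 := mul_lt_mul_of_pos_left hpow h9
    have h11 : D₁ * Real.exp (-1) * ((n:ℝ)/2) * (2*Real.exp 1/D₁)
        = Real.exp (-1) * Real.exp 1 * (n:ℝ) := by
      field_simp
    rw [hee, one_mul] at h11
    rw [h11] at h10
    rw [hsplit] at key
    nlinarith
  have ht0 : 0 < t := lt_trans (by positivity) ht1n
  have htinv : 1/t ≤ (n:ℝ) := by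
    rw [div_lt_iff₀ hn0] at ht1n
    rw [div_le_iff₀ ht0]
    nlinarith
  -- Step 2 : t ≤ 1/2
  have ht12 : t ≤ 1/2 := by
    by_contra hcon
    push_neg at hcon
    have hMU := M_upper a r y n hy hDup hD₂.le (show (0:ℝ) < 1/2 by norm_num)
      (by rw [← htdef]; linarith)
    have h1 := HU2 (1/2) n (by norm_num) (by norm_num)
    have h2 := HU1 (1/2) n (by norm_num) (by norm_num)
    have h3 : (n:ℝ) ≤ K₂ := by
      rw [← hM]
      calc Mfun a n (σ n)
          ≤ D₂ * ∑ j ∈ Finset.Icc 1 n, (j:ℝ)^r * Real.exp (-(j * (1/2)))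
            + D₂ * ((1:ℝ)/2)⁻¹ * ∑ j ∈ Finset.Icc 1 n, (j:ℝ)^(r-1) * Real.exp (-(j * (1/2))) := hMU
        _ ≤ K₂ := by
            rw [hK₂def]
            have g1 := mul_le_mul_of_nonneg_left h1 hD₂.le
            have g2 := mul_le_mul_of_nonneg_left h2 (by positivity : (0:ℝ) ≤ D₂ * ((1:ℝ)/2)⁻¹)
            linarith
    linarith
  have ht1 : t ≤ 1 := by linarith
  -- Step 3 : M upper bound ⇒ n ≤ A t^{-(r+1)}
  have hpowsimp : t⁻¹ * t^(-(r-1+1)) = t^(-(r+1)) := by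
    rw [← Real.rpow_neg_one t, ← Real.rpow_add ht0]
    congr 1; ring
  have hMub : (n:ℝ) ≤ A * t^(-(r+1)) := by
    rw [← hM]
    have hMU := M_upper a r y n hy hDup hD₂.le ht0 (le_of_eq htdef.symm)
    have h1 := HU2 t n ht0 ht1
    have h2 := HU1 t n ht0 ht1
    have g1 := mul_le_mul_of_nonneg_left h1 hD₂.le
    have g2 := mul_le_mul_of_nonneg_left h2 (by positivity : (0:ℝ) ≤ D₂ * t⁻¹)
    have g3 : D₂ * t⁻¹ * (CU1 * t^(-(r-1+1))) = D₂ * CU1 * t^(-(r+1)) := by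
      rw [← hpowsimp]; ring
    rw [g3] at g2
    calc Mfun a n (σ n) ≤ _ := hMU
      _ ≤ D₂ * (CU2 * t^(-(r+1))) + D₂ * CU1 * t^(-(r+1)) := by linarith
      _ = A * t^(-(r+1)) := by rw [hAdef]; ring
  -- Step 4 : M lower bound ⇒ γ t^{-(r+1)} ≤ n
  have hMlb : γ * t^(-(r+1)) ≤ (n:ℝ) := by
    rw [← hM]
    have hS := sumL r hr.le t n ht0 ht12 htinv
    have hML := M_lower a r y n hy hDlow hD₁.le hσ0
    calc γ * t^(-(r+1)) = D₁ * (Real.exp (-1) * (4:ℝ)⁻¹^(r+1) * t^(-(r+1))) := by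
          rw [hγdef]; ring
      _ ≤ D₁ * ∑ j ∈ Finset.Icc 1 n, (j:ℝ)^r * Real.exp (-(j*t)) :=
          mul_le_mul_of_nonneg_left hS hD₁.le
      _ ≤ Mfun a n (σ n) := hML
  -- Step 5 : B2 bounds in t
  have hexp2 : -(r+1+1) = -(r+2) := by ring
  have hB2ub : B2 a n (σ n) ≤ B * t^(-(r+2)) := by
    have hBU := B2_upper a r y n hy hDup hD₂.le ht0 (le_of_eq htdef.symm)
    have h1 := HU3 t n ht0 ht1
    have h2 := HU1 t n ht0 ht1
    have g1 := mul_le_mul_of_nonneg_left h1 (by positivity : (0:ℝ) ≤ 2*D₂)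
    have g2 := mul_le_mul_of_nonneg_left h2 (by positivity : (0:ℝ) ≤ 2*D₂*(t⁻¹)^2)
    have g3 : 2*D₂*(t⁻¹)^2 * (CU1 * t^(-(r-1+1))) = 2*D₂*CU1 * t^(-(r+2)) := by
      have e1 : (t⁻¹)^2 * t^(-(r-1+1)) = t^(-(r+2)) := by
        rw [← Real.rpow_neg_one t, ← Real.rpow_natCast (t ^ ((-1:ℝ))) 2,
          ← Real.rpow_mul ht0.le, ← Real.rpow_add ht0]
        congr 1; push_cast; ring
      rw [← e1]; ring
    rw [g3] at g2
    have g4 : 2*D₂ * (CU3 * t^(-(r+1+1))) = 2*D₂*CU3 * t^(-(r+2)) := by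
      rw [hexp2]; ring
    rw [g4] at g1
    calc B2 a n (σ n) ≤ _ := hBU
      _ ≤ 2*D₂*CU3 * t^(-(r+2)) + 2*D₂*CU1 * t^(-(r+2)) := by linarith
      _ = B * t^(-(r+2)) := by rw [hBdef]; ring
  have hB2lb : δ * t^(-(r+2)) ≤ B2 a n (σ n) := by
    have hS := sumL (r+1) (by linarith) t n ht0 ht12 htinv
    have hBL := B2_lower a r y n hy hDlow hD₁.le hσ0
    have e1 : (4:ℝ)⁻¹^(r+1+1) = (4:ℝ)⁻¹^(r+2) := by rw [show r+1+1 = r+2 by ring]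
    rw [hexp2, e1] at hS
    calc δ * t^(-(r+2)) = D₁ * (Real.exp (-1) * (4:ℝ)⁻¹^(r+2) * t^(-(r+2))) := by
          rw [hδdef]; ring
      _ ≤ D₁ * ∑ j ∈ Finset.Icc 1 n, (j:ℝ)^(r+1) * Real.exp (-(j*t)) :=
          mul_le_mul_of_nonneg_left hS hD₁.le
      _ ≤ B2 a n (σ n) := hBL
  -- Step 6 : convert t powers to n powers
  have htr1 : 0 < t^(-(r+1)) := Real.rpow_pos_of_pos ht0 _
  have hup_t : t^(-(r+1)) ≤ (n:ℝ)/γ := by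
    rw [le_div_iff₀ hγ]; nlinarith
  have hlow_t : (n:ℝ)/A ≤ t^(-(r+1)) := by
    rw [div_le_iff₀ hA]; nlinarith
  have hexpe : t^(-(r+2)) = (t^(-(r+1)))^e := by
    rw [show -(r+2) = -(r+1)*e by rw [hedef]; field_simp, Real.rpow_mul ht0.le]
  constructor
  · -- lower bound
    have h1 : ((n:ℝ)/A)^e ≤ (t^(-(r+1)))^e := Real.rpow_le_rpow (by positivity) hlow_t he0
    have h2 : δ * ((n:ℝ)/A)^e ≤ B2 a n (σ n) := by
      calc δ * ((n:ℝ)/A)^e ≤ δ * (t^(-(r+1)))^e := mul_le_mul_of_nonneg_left h1 hδ.le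
        _ = δ * t^(-(r+2)) := by rw [hexpe]
        _ ≤ B2 a n (σ n) := hB2lb
    have h3 : δ * ((n:ℝ)/A)^e = δ / A^e * (n:ℝ)^e := by
      rw [Real.div_rpow hn0.le hA.le]; ring
    rw [← h3]; exact h2
  · -- upper bound
    have h1 : (t^(-(r+1)))^e ≤ ((n:ℝ)/γ)^e := Real.rpow_le_rpow htr1.le hup_t he0
    have h2 : B2 a n (σ n) ≤ B * ((n:ℝ)/γ)^e := by
      calc B2 a n (σ n) ≤ B * t^(-(r+2)) := hB2ub
        _ = B * (t^(-(r+1)))^e := by rw [hexpe]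
        _ ≤ B * ((n:ℝ)/γ)^e := mul_le_mul_of_nonneg_left h1 hB.le
    have h3 : B * ((n:ℝ)/γ)^e = B / γ^e * (n:ℝ)^e := by
      rw [Real.div_rpow hn0.le hγ.le]; ring
    rw [← h3]; exact h2
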